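/- Let v : ℝ_{>0} → ℝ be differentiable, c₀, c₁ > 0, Mv(x) := sup_{i>0}{v(x+i) - c₀i - c₁}, and suppose v ≥ Mv everywhere. If x ∈ ℝ_{>0} satisfies v(x) = Mv(x) with the supremum attained at ξ > 0, then v'(x+ξ) = c₀ and v'(x) = c₀. -/

import Mathlib

theorem stmt_9 (c₀ c₁ : ℝ) (hc₀ : 0 < c₀) (hc₁ : 0 < c₁) (v v' : ℝ → ℝ)
    (hderiv : ∀ z > (0:ℝ), HasDerivAt v (v' z) z)
    (hgeq : ∀ z > (0:ℝ), ∀ i > (0:ℝ), v (z + i) - c₀ * i - c₁ ≤ v z)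
    (x ξ : ℝ) (hx : 0 < x) (hξ : 0 < ξ)
    (hatt : v x = v (x + ξ) - c₀ * ξ - c₁) :
    v' (x + ξ) = c₀ ∧ v' x = c₀ := by
  have hxξ : 0 < x + ξ := by linarith
  -- f i = v (x + i) - c₀ * i - c₁ has a local max at ξ
  have hf : HasDerivAt (fun i => v (x + i) - c₀ * i - c₁) (v' (x + ξ) - c₀) ξ := by
    have h1 : HasDerivAt (fun i : ℝ => v (x + i)) (v' (x + ξ) * 1) ξ :=
      (hderiv (x + ξ) hxξ).comp ξ ((hasDerivAt_id ξ).const_add x)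
    have h2 : HasDerivAt (fun i : ℝ => c₀ * i + c₁) (c₀ * 1) ξ :=
      ((hasDerivAt_id ξ).const_mul c₀).add_const c₁
    have h3 := h1.sub h2
    have : HasDerivAt (fun i => v (x + i) - (c₀ * i + c₁)) (v' (x + ξ) - c₀) ξ := by
      exact h3.congr_deriv (by ring)
    simpa [sub_sub] using this
  have hmax : IsLocalMax (fun i => v (x + i) - c₀ * i - c₁) ξ := by
    filter_upwards [eventually_gt_nhds hξ] with i hi
    have := hgeq x hx i hi
    simp only [← hatt] at *
    linarith
  have hz1 : v' (x + ξ) - c₀ = 0 := hmax.hasDerivAt_eq_zero hf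
  have hd1 : v' (x + ξ) = c₀ := by linarith
  -- g z = v z - v (z + ξ) has a local min at x
  have hg : HasDerivAt (fun z => v z - v (z + ξ)) (v' x - c₀) x := by
    have h1 : HasDerivAt (fun z : ℝ => v (z + ξ)) (v' (x + ξ) * 1) x :=
      (hderiv (x + ξ) hxξ).comp x ((hasDerivAt_id x).add_const ξ)
    have h3 := (hderiv x hx).sub h1
    exact h3.congr_deriv (by rw [hd1]; ring)
  have hmin : IsLocalMin (fun z => v z - v (z + ξ)) x := by
    filter_upwards [eventually_gt_nhds hx] with z hz
    have := hgeq z hz ξ hξ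
    linarith
  have hz2 : v' x - c₀ = 0 := hmin.hasDerivAt_eq_zero hg
  exact ⟨hd1, by linarith⟩
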